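/- arXiv:0706.4138 — 2 statements merged into one kernel-verified Lean document; each statement's English description precedes it below -/
import Mathlib

section
/- The nuclear norm is the convex envelope of the rank function on the operator-norm unit ball: (i) the function X ↦ ‖X‖_* is convex on {X ∈ ℝ^{m×n} : ‖X‖ ≤ 1} and satisfies ‖X‖_* ≤ rank(X) for all X in this set; and (ii) if g is any convex function on {X ∈ ℝ^{m×n} : ‖X‖ ≤ 1} with g(X) ≤ rank(X) for all X in this set, then g(X) ≤ ‖X‖_* for all X in this set. -/
open Matrix
open Finset

/-- The operator norm (largest singular value / induced 2-norm) of a real matrix. -/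
noncomputable def opNorm {m n : Type*} [Fintype m] [Fintype n] [DecidableEq n]
    (X : Matrix m n ℝ) : ℝ :=
  ‖LinearMap.toContinuousLinearMap (Matrix.toEuclideanLin X)‖

/-- The nuclear norm (sum of singular values) of a real matrix, as the trace of √(XᵀX). -/
noncomputable def nucNorm {m n : Type*} [Fintype m] [Fintype n] [DecidableEq n]
    (X : Matrix m n ℝ) : ℝ :=
  ((Matrix.posSemidef_conjTranspose_mul_self X).1.eigenvectorUnitary.1 *
    diagonal ((√·) ∘ (Matrix.posSemidef_conjTranspose_mul_self X).1.eigenvalues) *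
    (star (Matrix.posSemidef_conjTranspose_mul_self X).1.eigenvectorUnitary : Matrix n n ℝ)).trace


variable {m n : ℕ} (X : Matrix (Fin m) (Fin n) ℝ)

namespace NucAux

noncomputable def hH (X : Matrix (Fin m) (Fin n) ℝ) : (Xᴴ * X).IsHermitian :=
  (Matrix.posSemidef_conjTranspose_mul_self X).1

noncomputable def ev (X : Matrix (Fin m) (Fin n) ℝ) (i : Fin n) : Fin n → ℝ :=
  ⇑((hH X).eigenvectorBasis i)

noncomputable def lam (X : Matrix (Fin m) (Fin n) ℝ) (i : Fin n) : ℝ :=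
  (hH X).eigenvalues i

lemma lam_nonneg (i : Fin n) : 0 ≤ lam X i :=
  (Matrix.posSemidef_conjTranspose_mul_self X).eigenvalues_nonneg i

lemma ev_dot (i j : Fin n) : ev X i ⬝ᵥ ev X j = if i = j then 1 else 0 := by
  have h := orthonormal_iff_ite.mp (hH X).eigenvectorBasis.orthonormal i j
  rw [EuclideanSpace.inner_eq_star_dotProduct, dotProduct_comm] at h
  simpa [ev] using h

lemma dot_Xv (a b : Fin n → ℝ) :
    (X *ᵥ a) ⬝ᵥ (X *ᵥ b) = a ⬝ᵥ ((Xᴴ * X) *ᵥ b) := by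
  rw [← Matrix.mulVec_mulVec, Matrix.dotProduct_mulVec a,
    Matrix.conjTranspose_eq_transpose_of_trivial, Matrix.vecMul_transpose]

lemma dot_Xv_ev (i j : Fin n) :
    (X *ᵥ ev X i) ⬝ᵥ (X *ᵥ ev X j) = if i = j then lam X j else 0 := by
  rw [dot_Xv]
  have h : (Xᴴ * X) *ᵥ ev X j = lam X j • ev X j := (hH X).mulVec_eigenvectorBasis j
  rw [h, dotProduct_smul, ev_dot]
  simp [lam]

end NucAux

namespace NucAux

noncomputable def sig (X : Matrix (Fin m) (Fin n) ℝ) (i : Fin n) : ℝ :=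
  Real.sqrt (lam X i)

lemma sig_nonneg (i : Fin n) : 0 ≤ sig X i := Real.sqrt_nonneg _

lemma sig_sq (i : Fin n) : sig X i ^ 2 = lam X i := Real.sq_sqrt (lam_nonneg X i)

lemma Xv_eq_zero {i : Fin n} (h : lam X i = 0) : X *ᵥ ev X i = 0 := by
  have := dot_Xv_ev X i i
  simp [h] at this
  exact this

noncomputable def uu (X : Matrix (Fin m) (Fin n) ℝ) (i : Fin n) : Fin m → ℝ :=
  (sig X i)⁻¹ • (X *ᵥ ev X i)

lemma sig_smul_uu (i : Fin n) : sig X i • uu X i = X *ᵥ ev X i := by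
  rcases eq_or_ne (lam X i) 0 with h | h
  · simp [uu, Xv_eq_zero X h]
  · have hs : sig X i ≠ 0 := by
      simp [sig, Real.sqrt_eq_zero (lam_nonneg X i)]; exact h
    rw [uu, smul_smul, mul_inv_cancel₀ hs, one_smul]

lemma uu_dot (i j : Fin n) :
    uu X i ⬝ᵥ uu X j = if i = j then (if lam X i = 0 then 0 else 1) else 0 := by
  rw [uu, uu, smul_dotProduct, dotProduct_smul, dot_Xv_ev]
  rcases eq_or_ne i j with rfl | hij
  · rcases eq_or_ne (lam X i) 0 with h | h
    · simp [h]
    · have hs : sig X i ≠ 0 := by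
        simp [sig, Real.sqrt_eq_zero (lam_nonneg X i)]; exact h
      simp only [if_pos rfl, if_neg h, smul_eq_mul]
      field_simp
      rw [← sig_sq X i]; simp
  · simp [hij]

lemma key_sum (c b : Fin n) :
    ∑ i, ev X i c * ev X i b = if c = b then 1 else 0 := by
  have h := congrFun (congrFun (Unitary.coe_mul_star_self (hH X).eigenvectorUnitary) c) b
  simp only [Matrix.mul_apply, Matrix.star_apply, Matrix.one_apply] at h
  simp only [Matrix.IsHermitian.eigenvectorUnitary_apply, Matrix.star_apply, star_trivial] at h
  rw [← h]
  refine Finset.sum_congr rfl fun i _ => ?_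
  simp [ev]

lemma expansion : X = ∑ i, vecMulVec (X *ᵥ ev X i) (ev X i) := by
  ext a b
  have : (∑ i, vecMulVec (X *ᵥ ev X i) (ev X i)) a b
      = ∑ i, (X *ᵥ ev X i) a * ev X i b := by
    rw [Matrix.sum_apply]
    exact Finset.sum_congr rfl fun i _ => rfl
  rw [this]
  calc X a b = ∑ c, X a c * (if c = b then 1 else 0) := by simp
    _ = ∑ c, X a c * ∑ i, ev X i c * ev X i b := by
        exact Finset.sum_congr rfl fun c _ => by rw [key_sum]
    _ = ∑ c, ∑ i, X a c * ev X i c * ev X i b := by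
        exact Finset.sum_congr rfl fun c _ => by rw [Finset.mul_sum]; ring_nf
    _ = ∑ i, ∑ c, X a c * ev X i c * ev X i b := Finset.sum_comm
    _ = ∑ i, (X *ᵥ ev X i) a * ev X i b := by
        refine Finset.sum_congr rfl fun i _ => ?_
        rw [Matrix.mulVec, dotProduct, Finset.sum_mul]

lemma parseval (y : Fin n → ℝ) : ∑ i, (ev X i ⬝ᵥ y) ^ 2 = y ⬝ᵥ y := by
  calc ∑ i, (ev X i ⬝ᵥ y) ^ 2
      = ∑ i, ∑ c, ∑ b, (y c * y b) * (ev X i c * ev X i b) := by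
        refine Finset.sum_congr rfl fun i _ => ?_
        rw [sq, dotProduct, Finset.sum_mul_sum]
        exact Finset.sum_congr rfl fun c _ => Finset.sum_congr rfl fun b _ => by ring
    _ = ∑ c, ∑ b, (y c * y b) * ∑ i, ev X i c * ev X i b := by
        rw [Finset.sum_comm]
        refine Finset.sum_congr rfl fun c _ => ?_
        rw [Finset.sum_comm]
        exact Finset.sum_congr rfl fun b _ => by rw [Finset.mul_sum]
    _ = y ⬝ᵥ y := by
        simp_rw [key_sum]
        simp [dotProduct, sq]

end NucAux

namespace NucAux

lemma euclid_norm_sq {k : ℕ} (w : Fin k → ℝ) :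
    ‖(WithLp.equiv 2 (Fin k → ℝ)).symm w‖ ^ 2 = w ⬝ᵥ w := by
  rw [← real_inner_self_eq_norm_sq]
  rw [EuclideanSpace.inner_eq_star_dotProduct]
  simp [dotProduct]

lemma clm_apply (Z : Matrix (Fin m) (Fin n) ℝ) (x : EuclideanSpace ℝ (Fin n)) :
    LinearMap.toContinuousLinearMap (Matrix.toEuclideanLin Z) x
      = (WithLp.equiv 2 (Fin m → ℝ)).symm (Z *ᵥ (WithLp.equiv 2 (Fin n → ℝ)) x) := rfl

lemma dot_le_of_opNorm {Z : Matrix (Fin m) (Fin n) ℝ} (h : opNorm Z ≤ 1) (y : Fin n → ℝ) :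
    (Z *ᵥ y) ⬝ᵥ (Z *ᵥ y) ≤ y ⬝ᵥ y := by
  set f := LinearMap.toContinuousLinearMap (Matrix.toEuclideanLin Z)
  have h1 : ‖f ((WithLp.equiv 2 (Fin n → ℝ)).symm y)‖
      ≤ ‖(WithLp.equiv 2 (Fin n → ℝ)).symm y‖ := by
    calc ‖f ((WithLp.equiv 2 (Fin n → ℝ)).symm y)‖
        ≤ ‖f‖ * ‖(WithLp.equiv 2 (Fin n → ℝ)).symm y‖ := f.le_opNorm _
      _ ≤ 1 * ‖(WithLp.equiv 2 (Fin n → ℝ)).symm y‖ :=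
          mul_le_mul_of_nonneg_right h (norm_nonneg _)
      _ = _ := one_mul _
  have h2 := pow_le_pow_left₀ (norm_nonneg _) h1 2
  rw [clm_apply, Equiv.apply_symm_apply, euclid_norm_sq, euclid_norm_sq] at h2
  exact h2

lemma opNorm_le_one_of {Z : Matrix (Fin m) (Fin n) ℝ}
    (h : ∀ y : Fin n → ℝ, (Z *ᵥ y) ⬝ᵥ (Z *ᵥ y) ≤ y ⬝ᵥ y) : opNorm Z ≤ 1 := by
  rw [opNorm]
  refine ContinuousLinearMap.opNorm_le_bound _ zero_le_one fun x => ?_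
  rw [one_mul, clm_apply]
  have h2 := h ((WithLp.equiv 2 (Fin n → ℝ)) x)
  rw [← euclid_norm_sq, ← euclid_norm_sq] at h2
  rw [Equiv.symm_apply_apply] at h2
  have := Real.sqrt_le_sqrt h2
  rwa [Real.sqrt_sq (norm_nonneg _), Real.sqrt_sq (norm_nonneg _)] at this

lemma dot_cauchy {k : ℕ} (a b : Fin k → ℝ) :
    a ⬝ᵥ b ≤ Real.sqrt (a ⬝ᵥ a) * Real.sqrt (b ⬝ᵥ b) := by
  have h := real_inner_le_norm ((WithLp.equiv 2 (Fin k → ℝ)).symm a)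
      ((WithLp.equiv 2 (Fin k → ℝ)).symm b)
  rw [EuclideanSpace.inner_eq_star_dotProduct] at h
  simp only [Equiv.apply_symm_apply, star_trivial] at h
  have ha : ‖(WithLp.equiv 2 (Fin k → ℝ)).symm a‖ = Real.sqrt (a ⬝ᵥ a) := by
    rw [← euclid_norm_sq, Real.sqrt_sq (norm_nonneg _)]
  have hb : ‖(WithLp.equiv 2 (Fin k → ℝ)).symm b‖ = Real.sqrt (b ⬝ᵥ b) := by
    rw [← euclid_norm_sq, Real.sqrt_sq (norm_nonneg _)]
  rw [ha, hb] at h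
  rw [dotProduct_comm] at h; exact h

end NucAux

namespace NucAux

lemma expansionW {k : ℕ} (W : Matrix (Fin k) (Fin n) ℝ) :
    W = ∑ i, vecMulVec (W *ᵥ ev X i) (ev X i) := by
  ext a b
  have : (∑ i, vecMulVec (W *ᵥ ev X i) (ev X i)) a b
      = ∑ i, (W *ᵥ ev X i) a * ev X i b := by
    rw [Matrix.sum_apply]
    exact Finset.sum_congr rfl fun i _ => rfl
  rw [this]
  calc W a b = ∑ c, W a c * (if c = b then 1 else 0) := by simp
    _ = ∑ c, W a c * ∑ i, ev X i c * ev X i b := by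
        exact Finset.sum_congr rfl fun c _ => by rw [key_sum]
    _ = ∑ c, ∑ i, W a c * ev X i c * ev X i b := by
        exact Finset.sum_congr rfl fun c _ => by rw [Finset.mul_sum]; ring_nf
    _ = ∑ i, ∑ c, W a c * ev X i c * ev X i b := Finset.sum_comm
    _ = ∑ i, (W *ᵥ ev X i) a * ev X i b := by
        refine Finset.sum_congr rfl fun i _ => ?_
        rw [Matrix.mulVec, dotProduct, Finset.sum_mul]

lemma vecMulVec_mulVec (w : Fin m → ℝ) (u y : Fin n → ℝ) :
    vecMulVec w u *ᵥ y = (u ⬝ᵥ y) • w := by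
  ext a
  simp only [Matrix.mulVec, dotProduct, Matrix.vecMulVec_apply, Pi.smul_apply,
    smul_eq_mul, Finset.sum_mul]
  exact Finset.sum_congr rfl fun b _ => by ring

noncomputable def Ymat (X : Matrix (Fin m) (Fin n) ℝ) (t : Finset (Fin n)) :
    Matrix (Fin m) (Fin n) ℝ :=
  ∑ i ∈ t, vecMulVec (uu X i) (ev X i)

lemma Ymat_mulVec (t : Finset (Fin n)) (y : Fin n → ℝ) :
    Ymat X t *ᵥ y = ∑ i ∈ t, (ev X i ⬝ᵥ y) • uu X i := by
  rw [Ymat]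
  induction t using Finset.cons_induction with
  | empty => simp
  | cons i t hi ih =>
    rw [Finset.sum_cons, Matrix.add_mulVec, ih, Finset.sum_cons, vecMulVec_mulVec]

lemma sum_dot {ι : Type*} {k : ℕ} (s : Finset ι) (f : ι → (Fin k → ℝ)) (b : Fin k → ℝ) :
    (∑ i ∈ s, f i) ⬝ᵥ b = ∑ i ∈ s, f i ⬝ᵥ b := by
  induction s using Finset.cons_induction with
  | empty => simp
  | cons i t hi ih => rw [Finset.sum_cons, add_dotProduct, ih, Finset.sum_cons]

lemma dot_sum {ι : Type*} {k : ℕ} (s : Finset ι) (b : Fin k → ℝ) (f : ι → (Fin k → ℝ)) :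
    b ⬝ᵥ (∑ i ∈ s, f i) = ∑ i ∈ s, b ⬝ᵥ f i := by
  induction s using Finset.cons_induction with
  | empty => simp
  | cons i t hi ih => rw [Finset.sum_cons, dotProduct_add, ih, Finset.sum_cons]

lemma Ymat_dot_le (t : Finset (Fin n)) (y : Fin n → ℝ) :
    (Ymat X t *ᵥ y) ⬝ᵥ (Ymat X t *ᵥ y) ≤ y ⬝ᵥ y := by
  rw [Ymat_mulVec]
  have hexp : (∑ i ∈ t, (ev X i ⬝ᵥ y) • uu X i) ⬝ᵥ (∑ j ∈ t, (ev X j ⬝ᵥ y) • uu X j)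
      = ∑ i ∈ t, ∑ j ∈ t, (ev X i ⬝ᵥ y) * (ev X j ⬝ᵥ y) * (uu X i ⬝ᵥ uu X j) := by
    rw [sum_dot]
    refine Finset.sum_congr rfl fun i _ => ?_
    rw [dot_sum]
    refine Finset.sum_congr rfl fun j _ => ?_
    rw [smul_dotProduct, dotProduct_smul]
    simp [mul_assoc]
  rw [hexp]
  have hdiag : ∀ i ∈ t, ∑ j ∈ t, (ev X i ⬝ᵥ y) * (ev X j ⬝ᵥ y) * (uu X i ⬝ᵥ uu X j)
      ≤ (ev X i ⬝ᵥ y) ^ 2 := by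
    intro i hi
    rw [Finset.sum_eq_single_of_mem i hi]
    · rw [uu_dot]
      simp only [if_pos rfl]
      rcases eq_or_ne (lam X i) 0 with h | h
      · simp [h]; positivity
      · simp [h, sq]
    · intro j _ hj
      rw [uu_dot, if_neg (Ne.symm hj), mul_zero]
  calc ∑ i ∈ t, ∑ j ∈ t, (ev X i ⬝ᵥ y) * (ev X j ⬝ᵥ y) * (uu X i ⬝ᵥ uu X j)
      ≤ ∑ i ∈ t, (ev X i ⬝ᵥ y) ^ 2 := Finset.sum_le_sum hdiag
    _ ≤ ∑ i, (ev X i ⬝ᵥ y) ^ 2 :=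
        Finset.sum_le_sum_of_subset_of_nonneg (Finset.subset_univ t)
          (fun i _ _ => sq_nonneg _)
    _ = y ⬝ᵥ y := parseval X y

lemma opNorm_Ymat (t : Finset (Fin n)) : opNorm (Ymat X t) ≤ 1 :=
  opNorm_le_one_of fun y => Ymat_dot_le X t y

lemma trace_conj_vecMulVec (Z : Matrix (Fin m) (Fin n) ℝ) (w : Fin m → ℝ) (u : Fin n → ℝ) :
    (Zᴴ * vecMulVec w u).trace = (Z *ᵥ u) ⬝ᵥ w := by
  simp only [Matrix.trace, Matrix.diag_apply, Matrix.mul_apply, Matrix.conjTranspose_apply,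
    star_trivial, Matrix.vecMulVec_apply, Matrix.mulVec, dotProduct]
  rw [Finset.sum_comm]
  refine Finset.sum_congr rfl fun a _ => ?_
  rw [Finset.sum_mul]
  exact Finset.sum_congr rfl fun b _ => by ring

lemma trace_eq_sum (Z W : Matrix (Fin m) (Fin n) ℝ) :
    (Zᴴ * W).trace = ∑ i, (Z *ᵥ ev X i) ⬝ᵥ (W *ᵥ ev X i) := by
  conv_lhs => rw [expansionW X W, Matrix.mul_sum, Matrix.trace_sum]
  exact Finset.sum_congr rfl fun i _ => trace_conj_vecMulVec Z _ _

lemma nucNorm_eq_sum : nucNorm X = ∑ i, sig X i := by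
  rw [nucNorm]
  exact (by
    rw [Matrix.trace_mul_cycle, Unitary.coe_star_mul_self]
    simp [Matrix.trace_diagonal, sig, lam, hH])

end NucAux

namespace NucAux

lemma ev_dot_self (i : Fin n) : ev X i ⬝ᵥ ev X i = 1 := by rw [ev_dot]; simp

lemma dot_Xv_self (i : Fin n) : (X *ᵥ ev X i) ⬝ᵥ (X *ᵥ ev X i) = lam X i := by
  rw [dot_Xv_ev]; simp

lemma trace_le_nucNorm (Z : Matrix (Fin m) (Fin n) ℝ) (hZ : opNorm Z ≤ 1) :
    (Zᴴ * X).trace ≤ nucNorm X := by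
  rw [trace_eq_sum X Z X, nucNorm_eq_sum]
  refine Finset.sum_le_sum fun i _ => ?_
  calc (Z *ᵥ ev X i) ⬝ᵥ (X *ᵥ ev X i)
      ≤ Real.sqrt ((Z *ᵥ ev X i) ⬝ᵥ (Z *ᵥ ev X i)) *
        Real.sqrt ((X *ᵥ ev X i) ⬝ᵥ (X *ᵥ ev X i)) := dot_cauchy _ _
    _ ≤ 1 * sig X i := by
        refine mul_le_mul ?_ ?_ (Real.sqrt_nonneg _) zero_le_one
        · have h1 := dot_le_of_opNorm hZ (ev X i)
          rw [ev_dot_self] at h1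
          calc Real.sqrt _ ≤ Real.sqrt 1 := Real.sqrt_le_sqrt h1
            _ = 1 := Real.sqrt_one
        · rw [dot_Xv_self]; exact le_of_eq rfl
    _ = sig X i := one_mul _

lemma Ymat_univ_mulVec (i : Fin n) : Ymat X Finset.univ *ᵥ ev X i = uu X i := by
  rw [Ymat_mulVec]
  rw [Finset.sum_eq_single_of_mem i (Finset.mem_univ i)]
  · rw [ev_dot_self, one_smul]
  · intro j _ hj
    rw [ev_dot, if_neg hj, zero_smul]

lemma uu_dot_Xv (i : Fin n) : uu X i ⬝ᵥ (X *ᵥ ev X i) = sig X i := by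
  rw [uu, smul_dotProduct, dot_Xv_self]
  rcases eq_or_ne (lam X i) 0 with h | h
  · simp [h, sig]
  · have hs : sig X i ≠ 0 := by
      simp [sig, Real.sqrt_eq_zero (lam_nonneg X i)]; exact h
    rw [smul_eq_mul, ← sig_sq X i]
    field_simp

lemma trace_Ymat_univ : ((Ymat X Finset.univ)ᴴ * X).trace = nucNorm X := by
  rw [trace_eq_sum X _ X, nucNorm_eq_sum]
  exact Finset.sum_congr rfl fun i _ => by rw [Ymat_univ_mulVec, uu_dot_Xv]

lemma sig_le_one (h : opNorm X ≤ 1) (i : Fin n) : sig X i ≤ 1 := by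
  have h1 := dot_le_of_opNorm h (ev X i)
  rw [ev_dot_self, dot_Xv_self] at h1
  rw [sig]
  exact Real.sqrt_le_one.mpr h1

lemma convexOn_nucNorm :
    ConvexOn ℝ {X : Matrix (Fin m) (Fin n) ℝ | opNorm X ≤ 1}
      (nucNorm : Matrix (Fin m) (Fin n) ℝ → ℝ) := by
  constructor
  · intro A hA B hB a b ha hb hab
    show opNorm _ ≤ 1
    rw [opNorm]
    have hmap : LinearMap.toContinuousLinearMap (Matrix.toEuclideanLin (a • A + b • B))
        = a • LinearMap.toContinuousLinearMap (Matrix.toEuclideanLin A)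
          + b • LinearMap.toContinuousLinearMap (Matrix.toEuclideanLin B) := by
      simp [map_add, _root_.map_smul]
    rw [hmap]
    calc ‖_ + _‖ ≤ ‖a • LinearMap.toContinuousLinearMap (Matrix.toEuclideanLin A)‖
          + ‖b • LinearMap.toContinuousLinearMap (Matrix.toEuclideanLin B)‖ := norm_add_le _ _
      _ ≤ a * 1 + b * 1 := by
          rw [norm_smul a (LinearMap.toContinuousLinearMap (Matrix.toEuclideanLin A)),
            norm_smul b (LinearMap.toContinuousLinearMap (Matrix.toEuclideanLin B))]
          exact add_le_add
            (mul_le_mul (le_of_eq (Real.norm_of_nonneg ha)) hA (norm_nonneg _) ha)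
            (mul_le_mul (le_of_eq (Real.norm_of_nonneg hb)) hB (norm_nonneg _) hb)
      _ = 1 := by rw [mul_one, mul_one, hab]
  · intro A hA B hB a b ha hb hab
    set C := a • A + b • B with hC
    have hkey : nucNorm C = ((Ymat C Finset.univ)ᴴ * C).trace := (trace_Ymat_univ C).symm
    have hlin : ((Ymat C Finset.univ)ᴴ * C).trace
        = a * ((Ymat C Finset.univ)ᴴ * A).trace + b * ((Ymat C Finset.univ)ᴴ * B).trace := by
      rw [hC, Matrix.mul_add, Matrix.mul_smul, Matrix.mul_smul, Matrix.trace_add,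
        Matrix.trace_smul, Matrix.trace_smul]
      simp
    have hZ := opNorm_Ymat C Finset.univ
    calc nucNorm C = a * ((Ymat C Finset.univ)ᴴ * A).trace
          + b * ((Ymat C Finset.univ)ᴴ * B).trace := by rw [hkey, hlin]
      _ ≤ a * nucNorm A + b * nucNorm B :=
          add_le_add (mul_le_mul_of_nonneg_left (trace_le_nucNorm A _ hZ) ha)
            (mul_le_mul_of_nonneg_left (trace_le_nucNorm B _ hZ) hb)
      _ = a • nucNorm A + b • nucNorm B := rfl

lemma nucNorm_le_rank (h : opNorm X ≤ 1) : nucNorm X ≤ (X.rank : ℝ) := by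
  classical
  rw [nucNorm_eq_sum]
  have hrank : X.rank = Fintype.card {i // lam X i ≠ 0} := by
    rw [← Matrix.rank_conjTranspose_mul_self X]
    exact (hH X).rank_eq_card_non_zero_eigs
  have hcard : Fintype.card {i // lam X i ≠ 0}
      = (Finset.univ.filter (fun i => lam X i ≠ 0)).card := Fintype.card_subtype _
  calc ∑ i, sig X i = ∑ i ∈ Finset.univ.filter (fun i => lam X i ≠ 0), sig X i := by
        refine (Finset.sum_filter_of_ne fun i _ hs => ?_).symm
        intro hl
        exact hs (by simp [sig, hl])
    _ ≤ ∑ i ∈ Finset.univ.filter (fun i => lam X i ≠ 0), (1 : ℝ) :=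
        Finset.sum_le_sum fun i _ => sig_le_one X h i
    _ = ((Finset.univ.filter (fun i => lam X i ≠ 0)).card : ℝ) := by simp
    _ = (X.rank : ℝ) := by rw [hrank, hcard]

end NucAux

namespace NucAux

lemma rank_add_le (A B : Matrix (Fin m) (Fin n) ℝ) : (A + B).rank ≤ A.rank + B.rank := by
  rw [Matrix.rank, Matrix.rank, Matrix.rank, Matrix.mulVecLin_add]
  have h2 : LinearMap.range (A.mulVecLin + B.mulVecLin)
      ≤ LinearMap.range A.mulVecLin ⊔ LinearMap.range B.mulVecLin := by
    rintro x ⟨y, rfl⟩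
    exact Submodule.add_mem_sup ⟨y, rfl⟩ ⟨y, rfl⟩
  exact le_trans (Submodule.finrank_mono h2)
    (Submodule.finrank_add_le_finrank_add_finrank _ _)

lemma rank_vecMulVec_le (w : Fin m → ℝ) (u : Fin n → ℝ) :
    (vecMulVec w u).rank ≤ 1 := by
  rw [Matrix.vecMulVec_eq (Fin 1)]
  calc (Matrix.replicateCol (Fin 1) w * Matrix.replicateRow (Fin 1) u).rank
      ≤ (Matrix.replicateCol (Fin 1) w).rank := Matrix.rank_mul_le_left _ _
    _ ≤ Fintype.card (Fin 1) := Matrix.rank_le_card_width _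
    _ = 1 := by simp

lemma rank_Ymat_le (t : Finset (Fin n)) : (Ymat X t).rank ≤ t.card := by
  rw [Ymat]
  induction t using Finset.cons_induction with
  | empty => simp
  | cons i t hi ih =>
    rw [Finset.sum_cons, Finset.card_cons]
    calc (vecMulVec (uu X i) (ev X i) + ∑ j ∈ t, vecMulVec (uu X j) (ev X j)).rank
        ≤ (vecMulVec (uu X i) (ev X i)).rank + (∑ j ∈ t, vecMulVec (uu X j) (ev X j)).rank :=
          rank_add_le _ _
      _ ≤ 1 + t.card := add_le_add (rank_vecMulVec_le _ _) ih
      _ = t.card + 1 := by omega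

noncomputable def wgt (X : Matrix (Fin m) (Fin n) ℝ) (t : Finset (Fin n)) : ℝ :=
  (∏ i ∈ t, sig X i) * ∏ i ∈ Finset.univ \ t, (1 - sig X i)

lemma wgt_nonneg (h : opNorm X ≤ 1) (t : Finset (Fin n)) : 0 ≤ wgt X t := by
  apply mul_nonneg
  · exact Finset.prod_nonneg fun i _ => sig_nonneg X i
  · exact Finset.prod_nonneg fun i _ => by linarith [sig_le_one X h i]

lemma wgt_sum : ∑ t ∈ (Finset.univ : Finset (Fin n)).powerset, wgt X t = 1 := by
  have h := Finset.prod_add (fun i => sig X i) (fun i => 1 - sig X i)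
      (Finset.univ : Finset (Fin n))
  simp only [add_sub_cancel, Finset.prod_const_one] at h
  rw [← h.symm]
  rfl

lemma wgt_marginal (i : Fin n) :
    ∑ t ∈ (Finset.univ : Finset (Fin n)).powerset, (if i ∈ t then wgt X t else 0)
      = sig X i := by
  classical
  have hins : (Finset.univ : Finset (Fin n)) = insert i (Finset.univ.erase i) :=
    (Finset.insert_erase (Finset.mem_univ i)).symm
  have hnotmem : i ∉ Finset.univ.erase i := Finset.notMem_erase i _
  rw [hins, Finset.sum_powerset_insert hnotmem]
  have h1 : ∑ t ∈ (Finset.univ.erase i).powerset, (if i ∈ t then wgt X t else 0) = 0 := by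
    refine Finset.sum_eq_zero fun t ht => ?_
    rw [if_neg]
    intro hit
    exact hnotmem (Finset.mem_powerset.mp ht hit)
  rw [h1, zero_add]
  have h2 : ∀ t ∈ (Finset.univ.erase i).powerset,
      (if i ∈ insert i t then wgt X (insert i t) else 0)
        = sig X i * ((∏ j ∈ t, sig X j) * ∏ j ∈ (Finset.univ.erase i) \ t, (1 - sig X j)) := by
    intro t ht
    have hts : t ⊆ Finset.univ.erase i := Finset.mem_powerset.mp ht
    have hit : i ∉ t := fun hit => hnotmem (hts hit)
    rw [if_pos (Finset.mem_insert_self i t), wgt]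
    rw [Finset.prod_insert hit]
    have hdiff : Finset.univ \ insert i t = (Finset.univ.erase i) \ t := by
      ext j
      simp only [Finset.mem_sdiff, Finset.mem_insert, Finset.mem_erase, Finset.mem_univ,
        true_and, and_true]
      tauto
    rw [hdiff]
    ring
  rw [Finset.sum_congr rfl h2, ← Finset.mul_sum]
  have h3 : ∑ t ∈ (Finset.univ.erase i).powerset,
      ((∏ j ∈ t, sig X j) * ∏ j ∈ (Finset.univ.erase i) \ t, (1 - sig X j)) = 1 := by
    have h := Finset.prod_add (fun j => sig X j) (fun j => 1 - sig X j) (Finset.univ.erase i)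
    simp only [add_sub_cancel, Finset.prod_const_one] at h
    exact h.symm
  rw [h3, mul_one]

end NucAux

namespace NucAux

lemma ite_smul_mat {c : ℝ} {P : Prop} [Decidable P] (V : Matrix (Fin m) (Fin n) ℝ) :
    (if P then c else 0) • V = (if P then c • V else 0) := by
  split <;> simp

lemma decomposition :
    ∑ t ∈ (Finset.univ : Finset (Fin n)).powerset, wgt X t • Ymat X t = X := by
  classical
  have step1 : ∀ t, wgt X t • Ymat X t
      = ∑ i, (if i ∈ t then wgt X t else 0) • vecMulVec (uu X i) (ev X i) := by
    intro t
    rw [Ymat, Finset.smul_sum]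
    rw [show ∑ i, (if i ∈ t then wgt X t else 0) • vecMulVec (uu X i) (ev X i)
        = ∑ i, (if i ∈ t then wgt X t • vecMulVec (uu X i) (ev X i) else 0) from
      Finset.sum_congr rfl fun i _ => ite_smul_mat _]
    rw [Finset.sum_ite_mem, Finset.univ_inter]
  rw [Finset.sum_congr rfl fun t _ => step1 t, Finset.sum_comm]
  have step3 : ∀ i : Fin n,
      ∑ t ∈ (Finset.univ : Finset (Fin n)).powerset,
        (if i ∈ t then wgt X t else 0) • vecMulVec (uu X i) (ev X i)
      = vecMulVec (X *ᵥ ev X i) (ev X i) := by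
    intro i
    rw [← Finset.sum_smul, wgt_marginal]
    have : sig X i • vecMulVec (uu X i) (ev X i) = vecMulVec (sig X i • uu X i) (ev X i) := by
      ext a b
      simp [Matrix.vecMulVec_apply, mul_assoc]
    rw [this, sig_smul_uu]
  rw [Finset.sum_congr rfl fun i _ => step3 i]
  exact (expansionW X X).symm

lemma wgt_card_sum :
    ∑ t ∈ (Finset.univ : Finset (Fin n)).powerset, wgt X t * (t.card : ℝ)
      = ∑ i, sig X i := by
  classical
  have step1 : ∀ t : Finset (Fin n), wgt X t * (t.card : ℝ)
      = ∑ i, (if i ∈ t then wgt X t else 0) := by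
    intro t
    rw [show ∑ i, (if i ∈ t then wgt X t else 0)
        = ∑ i ∈ Finset.univ ∩ t, wgt X t from Finset.sum_ite_mem _ _ _]
    rw [Finset.univ_inter, Finset.sum_const, nsmul_eq_mul, mul_comm]
  rw [Finset.sum_congr rfl fun t _ => step1 t, Finset.sum_comm]
  exact Finset.sum_congr rfl fun i _ => wgt_marginal X i

lemma envelope (g : Matrix (Fin m) (Fin n) ℝ → ℝ)
    (hg : ConvexOn ℝ {X : Matrix (Fin m) (Fin n) ℝ | opNorm X ≤ 1} g)
    (hgr : ∀ X : Matrix (Fin m) (Fin n) ℝ, opNorm X ≤ 1 → g X ≤ (X.rank : ℝ))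
    (h : opNorm X ≤ 1) : g X ≤ nucNorm X := by
  classical
  have h₀ : ∀ t ∈ (Finset.univ : Finset (Fin n)).powerset, 0 ≤ wgt X t :=
    fun t _ => wgt_nonneg X h t
  have hmem : ∀ t ∈ (Finset.univ : Finset (Fin n)).powerset,
      Ymat X t ∈ {X : Matrix (Fin m) (Fin n) ℝ | opNorm X ≤ 1} :=
    fun t _ => opNorm_Ymat X t
  have hjensen := hg.map_sum_le h₀ (wgt_sum X) hmem
  rw [decomposition X] at hjensen
  calc g X ≤ ∑ t ∈ (Finset.univ : Finset (Fin n)).powerset, wgt X t • g (Ymat X t) := hjensen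
    _ ≤ ∑ t ∈ (Finset.univ : Finset (Fin n)).powerset, wgt X t * (t.card : ℝ) := by
        refine Finset.sum_le_sum fun t ht => ?_
        rw [smul_eq_mul]
        refine mul_le_mul_of_nonneg_left ?_ (h₀ t ht)
        calc g (Ymat X t) ≤ ((Ymat X t).rank : ℝ) := hgr _ (opNorm_Ymat X t)
          _ ≤ (t.card : ℝ) := Nat.cast_le.mpr (rank_Ymat_le X t)
    _ = ∑ i, sig X i := wgt_card_sum X
    _ = nucNorm X := (nucNorm_eq_sum X).symm

end NucAux


/-- The nuclear norm is the convex envelope of the rank function on the operator-norm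
unit ball: it is convex there, lies below the rank, and dominates every convex function
lying below the rank on that set. -/
theorem nucNorm_convex_envelope_of_rank (m n : ℕ) :
    ConvexOn ℝ {X : Matrix (Fin m) (Fin n) ℝ | opNorm X ≤ 1} nucNorm ∧
    (∀ X : Matrix (Fin m) (Fin n) ℝ, opNorm X ≤ 1 → nucNorm X ≤ (X.rank : ℝ)) ∧
    (∀ g : Matrix (Fin m) (Fin n) ℝ → ℝ,
      ConvexOn ℝ {X : Matrix (Fin m) (Fin n) ℝ | opNorm X ≤ 1} g →
      (∀ X : Matrix (Fin m) (Fin n) ℝ, opNorm X ≤ 1 → g X ≤ (X.rank : ℝ)) →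
      ∀ X : Matrix (Fin m) (Fin n) ℝ, opNorm X ≤ 1 → g X ≤ nucNorm X) := by
  exact ⟨NucAux.convexOn_nucNorm, fun X h => NucAux.nucNorm_le_rank X h,
    fun g hg hgr X hX => NucAux.envelope X g hg hgr hX⟩
end

section
/- Let X ∈ ℝ^{m×n} and let r ≥ rank(X). Then there exist matrices L ∈ ℝ^{m×r} and R ∈ ℝ^{n×r} such that X = L·R' and (‖L‖_F² + ‖R‖_F²)/2 = ‖X‖_*. Consequently, for any linear map 𝒜 : ℝ^{m×n} → ℝ^p, any b ∈ ℝ^p, and any r greater than or equal to the rank of some nuclear-norm minimizer of {X : 𝒜(X) = b}, the optimal value of minimizing (‖L‖_F² + ‖R‖_F²)/2 over pairs (L,R) ∈ ℝ^{m×r} × ℝ^{n×r} with 𝒜(L·R') = b equals the minimum of ‖X‖_* over {X : 𝒜(X) = b}. -/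
open Matrix

/-- The Frobenius norm of a real matrix. -/
noncomputable def frobNorm {m n : Type*} [Fintype m] [Fintype n] (X : Matrix m n ℝ) : ℝ :=
  Real.sqrt (∑ i, ∑ j, X i j ^ 2)

noncomputable def Matrix.PosSemidef.sqrt {n : Type*} [Fintype n] [DecidableEq n]
    {A : Matrix n n ℝ} (hA : A.PosSemidef) : Matrix n n ℝ :=
  hA.1.eigenvectorUnitary.1 * diagonal ((√·) ∘ hA.1.eigenvalues) *
    (star hA.1.eigenvectorUnitary : Matrix n n ℝ)

theorem Matrix.IsHermitian.star_mul_self_mul_eq_diagonal {𝕜 n : Type*} [RCLike 𝕜] [Fintype n]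
    [DecidableEq n] {A : Matrix n n 𝕜} (hA : A.IsHermitian) :
    star (hA.eigenvectorUnitary : Matrix n n 𝕜) * A * (hA.eigenvectorUnitary : Matrix n n 𝕜)
      = diagonal (RCLike.ofReal ∘ hA.eigenvalues) := by
  have := hA.conjStarAlgAut_star_eigenvectorUnitary
  rw [Unitary.conjStarAlgAut_apply] at this
  simpa using this


section Aux
variable {m n : Type*} [Fintype m] [Fintype n]

lemma trace_conjTranspose_mul_self (M : Matrix m n ℝ) :
    (Mᴴ * M).trace = ∑ i, ∑ j, M i j ^ 2 := by
  rw [Finset.sum_comm]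
  simp [Matrix.trace, Matrix.mul_apply, Matrix.conjTranspose_apply, Matrix.diag, sq]

lemma frobNorm_sq' (M : Matrix m n ℝ) :
    Real.sqrt (∑ i, ∑ j, M i j ^ 2) ^ 2 = (Mᴴ * M).trace := by
  rw [trace_conjTranspose_mul_self, Real.sq_sqrt]
  positivity

lemma trace_conjTranspose_mul_self_nonneg (M : Matrix m n ℝ) :
    0 ≤ (Mᴴ * M).trace := by
  rw [trace_conjTranspose_mul_self]; positivity

lemma conjT_eq_transpose (M : Matrix m n ℝ) : Mᴴ = Mᵀ := by
  ext i j; simp [Matrix.conjTranspose_apply]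

-- spectral data over ℝ
example [DecidableEq n] (A : Matrix n n ℝ) (hA : A.PosSemidef) :
    (hA.1.eigenvectorUnitary : Matrix n n ℝ)ᴴ * A * (hA.1.eigenvectorUnitary : Matrix n n ℝ)
      = diagonal hA.1.eigenvalues := by
  have := hA.1.star_mul_self_mul_eq_diagonal
  rw [Matrix.star_eq_conjTranspose] at this
  simpa [RCLike.ofReal_real_eq_id] using this

example [DecidableEq n] (A : Matrix n n ℝ) (hA : A.PosSemidef) :
    (hA.1.eigenvectorUnitary : Matrix n n ℝ)ᴴ * (hA.1.eigenvectorUnitary : Matrix n n ℝ) = 1 := by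
  have := (hA.1.eigenvectorUnitary).2
  rw [Matrix.mem_unitaryGroup_iff'] at this
  rw [← Matrix.star_eq_conjTranspose]
  exact this

example [DecidableEq n] (A : Matrix n n ℝ) (hA : A.PosSemidef) :
    (hA.1.eigenvectorUnitary : Matrix n n ℝ) * (hA.1.eigenvectorUnitary : Matrix n n ℝ)ᴴ = 1 := by
  have := (hA.1.eigenvectorUnitary).2
  rw [Matrix.mem_unitaryGroup_iff] at this
  rw [← Matrix.star_eq_conjTranspose]
  exact this

lemma nucNorm_eq_sum' [DecidableEq n] (X : Matrix m n ℝ) :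
    (Matrix.posSemidef_conjTranspose_mul_self X).sqrt.trace
      = ∑ i, Real.sqrt ((Matrix.posSemidef_conjTranspose_mul_self X).1.eigenvalues i) := by
  set hA := Matrix.posSemidef_conjTranspose_mul_self X
  rw [Matrix.PosSemidef.sqrt, Matrix.trace_mul_cycle]
  have h1 : star (hA.1.eigenvectorUnitary : Matrix n n ℝ) * (hA.1.eigenvectorUnitary : Matrix n n ℝ) = 1 := by
    have := (hA.1.eigenvectorUnitary).2
    rw [Matrix.mem_unitaryGroup_iff'] at this
    exact this
  rw [h1, Matrix.one_mul, Matrix.trace_diagonal]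
  simp [RCLike.ofReal_real_eq_id]


lemma trace_conjTranspose_mul_le (P Q : Matrix m n ℝ) :
    (Pᴴ * Q).trace ≤ ((Pᴴ * P).trace + (Qᴴ * Q).trace) / 2 := by
  have h : (Pᴴ * Q).trace = ∑ i, ∑ j, P i j * Q i j := by
    rw [Finset.sum_comm]
    simp [Matrix.trace, Matrix.mul_apply, Matrix.conjTranspose_apply, Matrix.diag]
  rw [h, trace_conjTranspose_mul_self, trace_conjTranspose_mul_self]
  calc ∑ i, ∑ j, P i j * Q i j ≤ ∑ i, ∑ j, (P i j ^ 2 + Q i j ^ 2) / 2 := by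
        refine Finset.sum_le_sum fun i _ => Finset.sum_le_sum fun j _ => ?_
        nlinarith [sq_nonneg (P i j - Q i j)]
    _ = (∑ i, ∑ j, P i j ^ 2 + ∑ i, ∑ j, Q i j ^ 2) / 2 := by
        simp only [add_div, Finset.sum_add_distrib, Finset.sum_div]

lemma nuc_le {r : Type*} [Fintype r] [DecidableEq n] [DecidableEq m]
    (L : Matrix m r ℝ) (R : Matrix n r ℝ) :
    (Matrix.posSemidef_conjTranspose_mul_self (L * Rᵀ)).sqrt.trace
      ≤ ((Lᴴ * L).trace + (Rᴴ * R).trace) / 2 := by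
  set Y := L * Rᵀ with hY
  set hB := Matrix.posSemidef_conjTranspose_mul_self Y with hBdef
  set ν : n → ℝ := hB.1.eigenvalues with hν
  set W : Matrix n n ℝ := (hB.1.eigenvectorUnitary : Matrix n n ℝ) with hW
  have hν0 : ∀ i, 0 ≤ ν i := fun i => hB.eigenvalues_nonneg i
  have hW1 : Wᴴ * W = 1 := by
    have := (hB.1.eigenvectorUnitary).2
    rw [Matrix.mem_unitaryGroup_iff'] at this
    exact this
  have hW2 : W * Wᴴ = 1 := by
    have := (hB.1.eigenvectorUnitary).2
    rw [Matrix.mem_unitaryGroup_iff] at this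
    exact this
  have hspec : Wᴴ * (Yᴴ * (Y * W)) = diagonal ν := by
    have := hB.1.star_mul_self_mul_eq_diagonal
    rw [Matrix.star_eq_conjTranspose] at this
    simp only [RCLike.ofReal_real_eq_id, Function.comp_def, id] at this
    simp only [Matrix.mul_assoc] at this; exact this
  set w : n → ℝ := fun i => if ν i = 0 then 0 else (Real.sqrt (ν i))⁻¹ with hw
  set U : Matrix m n ℝ := Y * W * diagonal w with hU
  have hUH : Uᴴ = diagonal w * (Wᴴ * Yᴴ) := by
    rw [hU, Matrix.conjTranspose_mul, Matrix.conjTranspose_mul,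
      conjT_eq_transpose (diagonal w), Matrix.diagonal_transpose]
  have h1 : Uᴴ * (Y * W) = diagonal (fun i => w i * ν i) := by
    rw [hUH, Matrix.mul_assoc, Matrix.mul_assoc, hspec, Matrix.diagonal_mul_diagonal]
  have hwν : ∀ i, w i * ν i = Real.sqrt (ν i) := by
    intro i
    by_cases h : ν i = 0
    · simp [hw, h]
    · have hs : Real.sqrt (ν i) * Real.sqrt (ν i) = ν i := Real.mul_self_sqrt (hν0 i)
      have hspos : Real.sqrt (ν i) ≠ 0 := by
        intro h0; rw [h0, mul_zero] at hs; exact h hs.symm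
      simp only [hw, if_neg h]
      calc (Real.sqrt (ν i))⁻¹ * ν i
          = (Real.sqrt (ν i))⁻¹ * (Real.sqrt (ν i) * Real.sqrt (ν i)) := by rw [hs]
        _ = Real.sqrt (ν i) := inv_mul_cancel_left₀ hspos _
  have hnuc : hB.sqrt.trace = (Uᴴ * (Y * W)).trace := by
    rw [nucNorm_eq_sum', h1, Matrix.trace_diagonal]
    exact (Finset.sum_congr rfl fun i _ => (hwν i).symm)
  have hUU : Uᴴ * U = diagonal (fun i => w i * ν i * w i) := by
    have e1 : Uᴴ * U = Uᴴ * ((Y * W) * diagonal w) := by rw [← hU]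
    rw [e1, ← Matrix.mul_assoc, h1, Matrix.diagonal_mul_diagonal]
  have hUdiag : U * (Uᴴ * U) = U := by
    rw [hUU]
    have e2 : U * diagonal (fun i => w i * ν i * w i)
        = Y * W * diagonal (fun i => w i * (w i * ν i * w i)) := by
      rw [hU, Matrix.mul_assoc, Matrix.diagonal_mul_diagonal]
    have hfun : (fun i => w i * (w i * ν i * w i)) = w := by
      funext i
      by_cases h : ν i = 0
      · simp [hw, h]
      · have hs : Real.sqrt (ν i) * Real.sqrt (ν i) = ν i := Real.mul_self_sqrt (hν0 i)
        have hspos : Real.sqrt (ν i) ≠ 0 := by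
          intro h0; rw [h0, mul_zero] at hs; exact h hs.symm
        have hwn : (Real.sqrt (ν i))⁻¹ * ν i = Real.sqrt (ν i) := by
          calc (Real.sqrt (ν i))⁻¹ * ν i
              = (Real.sqrt (ν i))⁻¹ * (Real.sqrt (ν i) * Real.sqrt (ν i)) := by rw [hs]
            _ = Real.sqrt (ν i) := inv_mul_cancel_left₀ hspos _
        simp only [hw, if_neg h]
        calc (Real.sqrt (ν i))⁻¹ * ((Real.sqrt (ν i))⁻¹ * ν i * (Real.sqrt (ν i))⁻¹)
            = ((Real.sqrt (ν i))⁻¹ * ν i) * ((Real.sqrt (ν i))⁻¹ * (Real.sqrt (ν i))⁻¹) := by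
              ring
          _ = Real.sqrt (ν i) * ((Real.sqrt (ν i))⁻¹ * (Real.sqrt (ν i))⁻¹) := by rw [hwn]
          _ = (Real.sqrt (ν i) * (Real.sqrt (ν i))⁻¹) * (Real.sqrt (ν i))⁻¹ := by ring
          _ = (Real.sqrt (ν i))⁻¹ := by rw [mul_inv_cancel₀ hspos, one_mul]
    rw [e2, hfun, ← hU]
  set C : Matrix m m ℝ := 1 - U * Uᴴ with hC
  have hCH : Cᴴ = C := by
    simp [hC, Matrix.conjTranspose_sub, Matrix.conjTranspose_one, Matrix.conjTranspose_mul]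
  have hPP : (U * Uᴴ) * (U * Uᴴ) = U * Uᴴ := by
    calc (U * Uᴴ) * (U * Uᴴ) = (U * (Uᴴ * U)) * Uᴴ := by
          simp only [Matrix.mul_assoc]
      _ = U * Uᴴ := by rw [hUdiag]
  have hCC : C * C = C := by
    simp only [hC, Matrix.sub_mul, Matrix.mul_sub, Matrix.one_mul, Matrix.mul_one, hPP]
    abel
  have hLbound : (Lᴴ * (U * Uᴴ) * L).trace ≤ (Lᴴ * L).trace := by
    have hpos : 0 ≤ ((C * L)ᴴ * (C * L)).trace := trace_conjTranspose_mul_self_nonneg _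
    have heq : (C * L)ᴴ * (C * L) = Lᴴ * L - Lᴴ * (U * Uᴴ) * L := by
      rw [Matrix.conjTranspose_mul, hCH, ← Matrix.mul_assoc, Matrix.mul_assoc (Lᴴ) C C, hCC]
      simp only [hC, Matrix.mul_sub, Matrix.sub_mul, Matrix.mul_one, Matrix.one_mul,
        Matrix.mul_assoc]
    rw [heq, Matrix.trace_sub] at hpos
    linarith
  have hsplit : (Lᴴ * U)ᴴ * (Rᵀ * W) = Uᴴ * (Y * W) := by
    rw [Matrix.conjTranspose_mul, Matrix.conjTranspose_conjTranspose]
    conv_rhs => rw [hY]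
    simp only [Matrix.mul_assoc]
  have key := trace_conjTranspose_mul_le (Lᴴ * U) (Rᵀ * W)
  rw [hsplit, ← hnuc] at key
  have hPterm : ((Lᴴ * U)ᴴ * (Lᴴ * U)).trace ≤ (Lᴴ * L).trace := by
    have e3 : ((Lᴴ * U)ᴴ * (Lᴴ * U)).trace = (Lᴴ * (U * Uᴴ) * L).trace := by
      rw [Matrix.conjTranspose_mul, Matrix.conjTranspose_conjTranspose, Matrix.trace_mul_comm]
      simp only [Matrix.mul_assoc]
    rw [e3]
    exact hLbound
  have hW2' : W * Wᵀ = 1 := by rw [← conjT_eq_transpose]; exact hW2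
  have hQterm : ((Rᵀ * W)ᴴ * (Rᵀ * W)).trace = (Rᴴ * R).trace := by
    simp only [conjT_eq_transpose, Matrix.transpose_mul, Matrix.transpose_transpose]
    rw [Matrix.trace_mul_comm, Matrix.mul_assoc, ← Matrix.mul_assoc W Wᵀ, hW2', Matrix.one_mul]
  rw [hQterm] at key
  calc hB.sqrt.trace ≤ (((Lᴴ * U)ᴴ * (Lᴴ * U)).trace + (Rᴴ * R).trace) / 2 := key
    _ ≤ ((Lᴴ * L).trace + (Rᴴ * R).trace) / 2 := by linarith

lemma exists_factor {r : Type*} [Fintype r] [DecidableEq r] [DecidableEq n]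
    (X : Matrix m n ℝ) (hrank : X.rank ≤ Fintype.card r) :
    ∃ (L : Matrix m r ℝ) (R : Matrix n r ℝ),
      X = L * Rᵀ ∧
      (Lᴴ * L).trace = (Matrix.posSemidef_conjTranspose_mul_self X).sqrt.trace ∧
      (Rᴴ * R).trace = (Matrix.posSemidef_conjTranspose_mul_self X).sqrt.trace := by
  set hA := Matrix.posSemidef_conjTranspose_mul_self X with hAdef
  set μ : n → ℝ := hA.1.eigenvalues with hμ
  set V : Matrix n n ℝ := (hA.1.eigenvectorUnitary : Matrix n n ℝ) with hV
  have hμ0 : ∀ i, 0 ≤ μ i := fun i => hA.eigenvalues_nonneg i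
  have hV1 : Vᴴ * V = 1 := by
    have := (hA.1.eigenvectorUnitary).2
    rw [Matrix.mem_unitaryGroup_iff'] at this
    exact this
  have hV2 : V * Vᴴ = 1 := by
    have := (hA.1.eigenvectorUnitary).2
    rw [Matrix.mem_unitaryGroup_iff] at this
    exact this
  have hV1' : Vᵀ * V = 1 := by rw [← conjT_eq_transpose]; exact hV1
  have hV2' : V * Vᵀ = 1 := by rw [← conjT_eq_transpose]; exact hV2
  have hspec : Vᴴ * (Xᴴ * (X * V)) = diagonal μ := by
    have := hA.1.star_mul_self_mul_eq_diagonal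
    rw [Matrix.star_eq_conjTranspose] at this
    simp only [RCLike.ofReal_real_eq_id, Function.comp_def, id] at this
    simp only [Matrix.mul_assoc] at this; exact this
  have hspecT : Vᵀ * (Xᵀ * (X * V)) = diagonal μ := by
    simpa only [conjT_eq_transpose] using hspec
  -- embedding of nonzero eigenvalues into r
  have hcard : Fintype.card {i // μ i ≠ 0} ≤ Fintype.card r := by
    have h1 := hA.1.rank_eq_card_non_zero_eigs
    have h2 := Matrix.rank_conjTranspose_mul_self X
    simp only [hμ]
    omega
  obtain ⟨e⟩ : Nonempty ({i // μ i ≠ 0} ↪ r) :=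
    Function.Embedding.nonempty_iff_card_le.mpr hcard
  set c : n → ℝ := fun i => Real.sqrt (Real.sqrt (μ i)) with hc
  set c' : n → ℝ := fun i => if μ i = 0 then 0 else (c i)⁻¹ with hc'
  set ind : n → ℝ := fun i => if μ i = 0 then 0 else 1 with hind
  set z : n → ℝ := fun i => if μ i = 0 then 1 else 0 with hz
  set E : Matrix n r ℝ :=
    Matrix.of (fun i k => if h : μ i ≠ 0 then (if e ⟨i, h⟩ = k then (1:ℝ) else 0) else 0)
    with hE
  -- pointwise facts
  have hcc : ∀ i, c i * c i = Real.sqrt (μ i) :=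
    fun i => Real.mul_self_sqrt (Real.sqrt_nonneg _)
  have hcne : ∀ i, μ i ≠ 0 → c i ≠ 0 := by
    intro i h h0
    have := hcc i
    rw [h0, mul_zero] at this
    have : μ i = 0 := by
      have h2 := Real.sqrt_eq_zero (hμ0 i) |>.mp this.symm
      exact h2
    exact h this
  have hEE : E * Eᵀ = diagonal ind := by
    ext i j
    rw [Matrix.mul_apply]
    by_cases hi : μ i = 0
    · have hEzero : ∀ k, E i k = 0 := fun k => by simp [hE, hi]
      simp [hEzero, Matrix.diagonal_apply, hind, hi]
    · by_cases hj : μ j = 0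
      · have hEzero : ∀ k, E j k = 0 := fun k => by simp [hE, hj]
        have hd : diagonal ind i j = 0 := by
          by_cases hij : i = j
          · subst hij; exact absurd hj hi
          · simp [Matrix.diagonal_apply, hij]
        simp [Matrix.transpose_apply, hEzero, hd]
      · by_cases hij : i = j
        · subst hij
          have : ∀ k, E i k * Eᵀ k i = if e ⟨i, hi⟩ = k then (1:ℝ) else 0 := by
            intro k
            simp only [hE, Matrix.transpose_apply, Matrix.of_apply, dif_pos hi]
            split_ifs <;> ring
          simp only [this, Finset.sum_ite_eq', Finset.mem_univ, if_true,
            Matrix.diagonal_apply_eq, hind]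
          simp [hi]
        · have hne : e ⟨i, hi⟩ ≠ e ⟨j, hj⟩ := by
            intro hh
            exact hij (Subtype.mk_eq_mk.mp (e.injective hh))
          have : ∀ k, E i k * Eᵀ k j = 0 := by
            intro k
            simp only [hE, Matrix.transpose_apply, Matrix.of_apply, dif_pos hi, dif_pos hj]
            by_cases h1 : e ⟨i, hi⟩ = k
            · by_cases h2 : e ⟨j, hj⟩ = k
              · exact absurd (h1.trans h2.symm) hne
              · simp [h2]
            · simp [h1]
          simp only [this, Finset.sum_const_zero, Matrix.diagonal_apply_ne _ hij]
  -- X V (diag z) = 0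
  have hM0 : X * V * diagonal z = 0 := by
    apply Matrix.conjTranspose_mul_self_eq_zero.mp
    have hMH : (X * V * diagonal z)ᴴ = diagonal z * (Vᴴ * Xᴴ) := by
      rw [Matrix.conjTranspose_mul, Matrix.conjTranspose_mul,
        conjT_eq_transpose (diagonal z), Matrix.diagonal_transpose]
    have e1 : (X * V * diagonal z)ᴴ * (X * V * diagonal z)
        = (diagonal z * (Vᴴ * (Xᴴ * (X * V)))) * diagonal z := by
      rw [hMH]
      simp only [Matrix.mul_assoc]
    rw [e1, hspec, Matrix.diagonal_mul_diagonal, Matrix.diagonal_mul_diagonal]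
    have : (fun i => z i * μ i * z i) = fun _ => (0:ℝ) := by
      funext i
      by_cases h : μ i = 0 <;> simp [hz, h]
    rw [this, Matrix.diagonal_zero]
  have hdiag1 : diagonal (fun i => c' i * (ind i * c i)) = diagonal ind := by
    rw [Matrix.diagonal_eq_diagonal_iff]
    intro i
    by_cases h : μ i = 0
    · simp [hc', hind, h]
    · simp [hc', hind, h, inv_mul_cancel₀ (hcne i h)]
  have hindz : diagonal ind = 1 - diagonal z := by
    rw [← Matrix.diagonal_one, Matrix.diagonal_sub, Matrix.diagonal_eq_diagonal_iff]
    intro i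
    by_cases h : μ i = 0 <;> simp [hind, hz, h]
  refine ⟨X * V * diagonal c' * E, V * diagonal c * E, ?_, ?_, ?_⟩
  · -- X = L * Rᵀ
    rw [Matrix.transpose_mul, Matrix.transpose_mul, Matrix.diagonal_transpose]
    have e1 : X * V * diagonal c' * E * (Eᵀ * (diagonal c * Vᵀ))
        = X * (V * (diagonal c' * ((E * Eᵀ) * (diagonal c * Vᵀ)))) := by
      simp only [Matrix.mul_assoc]
    rw [e1, hEE, ← Matrix.mul_assoc (diagonal ind) (diagonal c) Vᵀ,
      Matrix.diagonal_mul_diagonal,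
      ← Matrix.mul_assoc (diagonal c') (diagonal fun i => ind i * c i) Vᵀ,
      Matrix.diagonal_mul_diagonal, hdiag1, hindz, Matrix.sub_mul, Matrix.one_mul,
      Matrix.mul_sub, Matrix.mul_sub, hV2']
    have e2 : X * (V * (diagonal z * Vᵀ)) = (X * V * diagonal z) * Vᵀ := by
      simp only [Matrix.mul_assoc]
    rw [e2, hM0, Matrix.zero_mul, Matrix.mul_one, sub_zero]
  · -- L trace
    rw [nucNorm_eq_sum', ← hAdef, ← hμ]
    simp only [conjT_eq_transpose]
    rw [Matrix.trace_mul_comm,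
      Matrix.transpose_mul, Matrix.transpose_mul, Matrix.transpose_mul,
      Matrix.diagonal_transpose]
    have e3 : X * V * diagonal c' * E * (Eᵀ * (diagonal c' * (Vᵀ * Xᵀ)))
        = X * (V * (diagonal c' * ((E * Eᵀ) * (diagonal c' * (Vᵀ * Xᵀ))))) := by
      simp only [Matrix.mul_assoc]
    rw [e3, hEE, ← Matrix.mul_assoc (diagonal ind) (diagonal c') (Vᵀ * Xᵀ),
      Matrix.diagonal_mul_diagonal,
      ← Matrix.mul_assoc (diagonal c') (diagonal fun i => ind i * c' i) (Vᵀ * Xᵀ),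
      Matrix.diagonal_mul_diagonal]
    rw [Matrix.trace_mul_comm]
    have e4 : V * (diagonal (fun i => c' i * (ind i * c' i)) * (Vᵀ * Xᵀ)) * X
        = V * (diagonal (fun i => c' i * (ind i * c' i)) * (Vᵀ * (Xᵀ * X))) := by
      simp only [Matrix.mul_assoc]
    rw [e4, Matrix.trace_mul_comm]
    have e5 : diagonal (fun i => c' i * (ind i * c' i)) * (Vᵀ * (Xᵀ * X)) * V
        = diagonal (fun i => c' i * (ind i * c' i)) * (Vᵀ * (Xᵀ * (X * V))) := by
      simp only [Matrix.mul_assoc]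
    rw [e5, hspecT, Matrix.diagonal_mul_diagonal, Matrix.trace_diagonal]
    refine Finset.sum_congr rfl fun i _ => ?_
    by_cases h : μ i = 0
    · simp [hc', hind, h]
    · have hs : Real.sqrt (μ i) * Real.sqrt (μ i) = μ i := Real.mul_self_sqrt (hμ0 i)
      have hsne : Real.sqrt (μ i) ≠ 0 := by
        intro h0; rw [h0, mul_zero] at hs; exact h hs.symm
      simp only [hc', hind, if_neg h, one_mul]
      calc (c i)⁻¹ * (c i)⁻¹ * μ i = (c i * c i)⁻¹ * μ i := by rw [mul_inv]
        _ = (Real.sqrt (μ i))⁻¹ * μ i := by rw [hcc]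
        _ = (Real.sqrt (μ i))⁻¹ * (Real.sqrt (μ i) * Real.sqrt (μ i)) := by rw [hs]
        _ = Real.sqrt (μ i) := inv_mul_cancel_left₀ hsne _
  · -- R trace
    rw [nucNorm_eq_sum', ← hAdef, ← hμ]
    simp only [conjT_eq_transpose]
    rw [Matrix.trace_mul_comm,
      Matrix.transpose_mul, Matrix.transpose_mul, Matrix.diagonal_transpose]
    have e6 : V * diagonal c * E * (Eᵀ * (diagonal c * Vᵀ))
        = V * (diagonal c * ((E * Eᵀ) * (diagonal c * Vᵀ))) := by
      simp only [Matrix.mul_assoc]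
    rw [e6, hEE, ← Matrix.mul_assoc (diagonal ind) (diagonal c) Vᵀ,
      Matrix.diagonal_mul_diagonal,
      ← Matrix.mul_assoc (diagonal c) (diagonal fun i => ind i * c i) Vᵀ,
      Matrix.diagonal_mul_diagonal]
    rw [Matrix.trace_mul_comm]
    have e7 : diagonal (fun i => c i * (ind i * c i)) * Vᵀ * V
        = diagonal (fun i => c i * (ind i * c i)) * (Vᵀ * V) := by
      simp only [Matrix.mul_assoc]
    rw [e7, hV1', Matrix.mul_one, Matrix.trace_diagonal]
    refine Finset.sum_congr rfl fun i _ => ?_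
    by_cases h : μ i = 0
    · simp [hind, h]
    · simp only [hind, if_neg h, one_mul]
      exact hcc i

lemma frobNorm_sq {m n : Type*} [Fintype m] [Fintype n] (M : Matrix m n ℝ) :
    frobNorm M ^ 2 = (Mᴴ * M).trace := frobNorm_sq' M

end Aux

/-- If r ≥ rank X then X admits a factorization X = L Rᵀ with
(‖L‖_F² + ‖R‖_F²)/2 = ‖X‖₊. Consequently, if X is a nuclear-norm minimizer of
{Y : 𝒜(Y) = b} of rank at most r, the optimal value of the factored problem
min (‖L‖_F² + ‖R‖_F²)/2 subject to 𝒜(L Rᵀ) = b is exactly ‖X‖₊ (and is attained). -/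
theorem factored_problem_equals_nucNorm_min (m n r : ℕ)
    (X : Matrix (Fin m) (Fin n) ℝ) (hrank : X.rank ≤ r) :
    (∃ (L : Matrix (Fin m) (Fin r) ℝ) (R : Matrix (Fin n) (Fin r) ℝ),
        X = L * Rᵀ ∧ (frobNorm L ^ 2 + frobNorm R ^ 2) / 2 = nucNorm X) ∧
    (∀ (p : ℕ) (𝒜 : Matrix (Fin m) (Fin n) ℝ →ₗ[ℝ] EuclideanSpace ℝ (Fin p))
        (b : EuclideanSpace ℝ (Fin p)),
      𝒜 X = b → (∀ Y : Matrix (Fin m) (Fin n) ℝ, 𝒜 Y = b → nucNorm X ≤ nucNorm Y) →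
      IsLeast {c : ℝ | ∃ (L : Matrix (Fin m) (Fin r) ℝ) (R : Matrix (Fin n) (Fin r) ℝ),
          𝒜 (L * Rᵀ) = b ∧ c = (frobNorm L ^ 2 + frobNorm R ^ 2) / 2}
        (nucNorm X)) := by
  obtain ⟨L0, R0, hfact, hLtr, hRtr⟩ :=
    exists_factor (r := Fin r) X (by simpa using hrank)
  have hval : (frobNorm L0 ^ 2 + frobNorm R0 ^ 2) / 2 = nucNorm X := by
    rw [frobNorm_sq, frobNorm_sq, hLtr, hRtr]
    simp only [nucNorm, Matrix.PosSemidef.sqrt]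
    ring
  refine ⟨⟨L0, R0, hfact, hval⟩, ?_⟩
  intro p 𝒜 b hXb hmin
  constructor
  · exact ⟨L0, R0, by rw [← hfact]; exact hXb, hval.symm⟩
  · rintro cv ⟨L, R, hLR, rfl⟩
    have h1 : nucNorm X ≤ nucNorm (L * Rᵀ) := hmin _ hLR
    have h2 : nucNorm (L * Rᵀ) ≤ (frobNorm L ^ 2 + frobNorm R ^ 2) / 2 := by
      have h3 := nuc_le L R
      rw [frobNorm_sq, frobNorm_sq]
      simpa only [nucNorm, Matrix.PosSemidef.sqrt] using h3
    linarith
end
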